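/- For n ≥ 4, the maximum size of a union of two chains in T_n^B equals 2n² - 3; that is, λ₁(T_n^B) + λ₂(T_n^B) = 2n² - 3 where λ₁(T_n^B) = n² + 1 and λ₂(T_n^B) = n² - 4. -/

import Mathlib

set_option maxHeartbeats 1600000

/-- Validity predicate for elements of the type B Tamari lattice `T_n^B`,
encoded as tuples `r : Fin n → Fin (n+1)` where the value `n` represents `∞`. -/
def ValidB (n : ℕ) (r : Fin n → Fin (n+1)) : Prop :=
  (∀ i j : Fin n, i < j → (r j : ℕ) < n → (j : ℕ) - (i : ℕ) ≤ (r j : ℕ) →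
      (r i : ℕ) ≤ (r j : ℕ) - ((j : ℕ) - (i : ℕ))) ∧
  (∀ i : Fin n, ∀ _h1 : (r i : ℕ) < n, ∀ h2 : (i : ℕ) + 1 ≤ (r i : ℕ),
      (r ⟨n + (i : ℕ) - (r i : ℕ), by have := i.isLt; omega⟩ : ℕ) = n)

variable {n : ℕ}

/-- weight of a tuple -/
def wt (r : Fin n → Fin (n+1)) : ℕ := ∑ i, (r i : ℕ)

lemma wt_le (r : Fin n → Fin (n+1)) : wt r ≤ n * n := by
  calc wt r ≤ ∑ _i : Fin n, n := Finset.sum_le_sum (fun i _ => by omega)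
  _ = n * n := by simp [mul_comm]

lemma eq_of_le_of_wt_le {r s : Fin n → Fin (n+1)} (h : r ≤ s) (hw : wt s ≤ wt r) : r = s := by
  have h1 : ∀ i ∈ Finset.univ, (r i : ℕ) ≤ (s i : ℕ) := fun i _ => h i
  have h2 : ∑ i, (r i : ℕ) = ∑ i, (s i : ℕ) :=
    le_antisymm (Finset.sum_le_sum h1) (by simpa [wt] using hw)
  funext i
  exact Fin.ext ((Finset.sum_eq_sum_iff_of_le h1).mp h2 i (Finset.mem_univ i))

/-- the staircase chain -/
def stair (n m : ℕ) : Fin n → Fin (n+1) :=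
  fun i => ⟨min n (m - n*(n-1-(i:ℕ))), by omega⟩

lemma stair_aux (n m k : ℕ) : ∑ q ∈ Finset.range k, min n (m - n*q) = min (n*k) m := by
  induction k with
  | zero => simp
  | succ k ih =>
    rw [Finset.sum_range_succ, ih]
    have : n*(k+1) = n*k + n := by ring
    omega

lemma wt_stair (n m : ℕ) : wt (stair n m) = min (n*n) m := by
  unfold wt stair
  have : ∑ i : Fin n, min n (m - n*(n-1-(i:ℕ))) = ∑ i ∈ Finset.range n, min n (m - n*(n-1-i)) :=
    (Finset.sum_range (fun i => min n (m - n*(n-1-i)))).symm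
  simp only [this]
  rw [show (fun i => min n (m - n*(n-1-i))) = (fun i => (fun q => min n (m - n*q)) (n-1-i)) from rfl]
  rw [Finset.sum_range_reflect (fun q => min n (m - n*q)) n]
  · rw [stair_aux]
  
lemma stair_mono {n : ℕ} {m m' : ℕ} (h : m ≤ m') : stair n m ≤ stair n m' := by
  intro i
  show min n (m - n*(n-1-(i:ℕ))) ≤ min n (m' - n*(n-1-(i:ℕ)))
  omega

lemma stair_valid (n m : ℕ) : ValidB n (stair n m) := by
  constructor
  · intro i j hij hjn hle
    have hij' : (i:ℕ) < (j:ℕ) := hij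
    show min n (m - n*(n-1-(i:ℕ))) ≤ _
    have hj : (stair n m j : ℕ) = min n (m - n*(n-1-(j:ℕ))) := rfl
    have h1 : n-1-(i:ℕ) = (n-1-(j:ℕ)) + ((j:ℕ) - (i:ℕ)) := by have := j.isLt; omega
    have h2 : n*(n-1-(i:ℕ)) = n*(n-1-(j:ℕ)) + n*((j:ℕ)-(i:ℕ)) := by rw [h1]; ring
    have h3 : n ≤ n*((j:ℕ)-(i:ℕ)) := by
      have : 1 ≤ (j:ℕ)-(i:ℕ) := by omega
      calc n = n*1 := (mul_one n).symm
      _ ≤ n*((j:ℕ)-(i:ℕ)) := Nat.mul_le_mul_left n this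
    rw [hj] at hjn hle
    omega
  · intro i h1 h2
    show min n (m - n*(n-1-(n + (i:ℕ) - (stair n m i : ℕ)))) = n
    set v := (stair n m i : ℕ) with hv
    have hvmin : v = min n (m - n*(n-1-(i:ℕ))) := rfl
    have hlt := i.isLt
    have hvn : v < n := h1
    have hvm : v = m - n*(n-1-(i:ℕ)) := by omega
    have hk : n-1-(n + (i:ℕ) - v) = v - (i:ℕ) - 1 := by omega
    rw [hk]
    -- need min n (m - n*(v-i-1)) = n i.e. m ≥ n*(v-i-1) + n
    have hm : m = n*(n-1-(i:ℕ)) + v := by omega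
    have : n*(v-(i:ℕ)-1) + n ≤ m := by
      rw [hm]
      have hle : v - (i:ℕ) - 1 + 1 ≤ n-1-(i:ℕ) := by omega
      calc n*(v-(i:ℕ)-1) + n = n*((v-(i:ℕ)-1) + 1) := by ring
      _ ≤ n*(n-1-(i:ℕ)) := Nat.mul_le_mul_left n hle
      _ ≤ n*(n-1-(i:ℕ)) + v := Nat.le_add_right _ _
    omega
/-- stage-1 coordinate values of the second chain (element of weight s, s ∈ {1} ∪ [3, 2n-3]) -/
def aval (n s : ℕ) (i : ℕ) : ℕ :=
  if i + 2 = n then (if s ≤ n then 1 else s-n+1)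
  else if i + 1 = n then (if s ≤ n then s-1 else n-1)
  else 0

/-- stage-2 coordinate values: element of weight 2n-2 + n*q + rem -/
def bval (n q rem : ℕ) (i : ℕ) : ℕ :=
  if i + q + 3 < n then 0
  else if i + q + 3 = n then (if rem ≤ 1 then 1 else rem - 1)
  else if i + q + 2 = n then (if rem ≤ 1 then n-2 else n-1)
  else if i + q + 1 = n then (if rem = 0 then n-1 else n)
  else n

lemma aval_le (n s i : ℕ) (hs : s ≤ 2*n-3) : aval n s i ≤ n := by
  unfold aval; split_ifs <;> omega

lemma bval_le (n q rem i : ℕ) (hrem : rem ≤ n-1) : bval n q rem i ≤ n := by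
  unfold bval; split_ifs <;> omega

def Ael (n s : ℕ) : Fin n → Fin (n+1) := fun i => ⟨min n (aval n s (i:ℕ)), by omega⟩

def Bel (n q rem : ℕ) : Fin n → Fin (n+1) := fun i => ⟨min n (bval n q rem (i:ℕ)), by omega⟩

lemma Ael_coe (n s : ℕ) (i : Fin n) (hs : s ≤ 2*n-3) : (Ael n s i : ℕ) = aval n s (i:ℕ) := by
  have := aval_le n s (i:ℕ) hs; simp [Ael]; omega

lemma Bel_coe (n q rem : ℕ) (i : Fin n) (hrem : rem ≤ n-1) :
    (Bel n q rem i : ℕ) = bval n q rem (i:ℕ) := by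
  have := bval_le n q rem (i:ℕ) hrem; simp [Bel]; omega
lemma sum_piece (n k : ℕ) (F : ℕ → ℕ) (hk : k + 3 ≤ n)
    (h0 : ∀ i, i < k → F i = 0) (htail : ∀ i, k+3 ≤ i → i < n → F i = n) :
    ∑ i ∈ Finset.range n, F i = F k + F (k+1) + F (k+2) + (n - (k+3)) * n := by
  rw [Finset.range_eq_Ico, ← Finset.sum_Ico_consecutive F (Nat.zero_le (k+3)) hk]
  have h1 : ∑ i ∈ Finset.Ico 0 (k+3), F i = F k + F (k+1) + F (k+2) := by
    rw [← Finset.range_eq_Ico, Finset.sum_range_succ, Finset.sum_range_succ,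
      Finset.sum_range_succ, Finset.sum_eq_zero (fun i hi => h0 i (Finset.mem_range.mp hi))]
    omega
  have h2 : ∑ i ∈ Finset.Ico (k+3) n, F i = (n - (k+3)) * n := by
    rw [Finset.sum_congr rfl (fun i hi => htail i (Finset.mem_Ico.mp hi).1 (Finset.mem_Ico.mp hi).2)]
    simp [Nat.card_Ico]
  omega

lemma wt_Ael (n s : ℕ) (hn : 4 ≤ n) (hs1 : 1 ≤ s) (hs2 : s ≤ 2*n-3) : wt (Ael n s) = s := by
  unfold wt
  have hcoe : ∀ i : Fin n, (Ael n s i : ℕ) = aval n s (i:ℕ) := fun i => Ael_coe n s i hs2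
  rw [Finset.sum_congr rfl (fun i _ => hcoe i), ← Finset.sum_range (fun i => aval n s i)]
  rw [sum_piece n (n-3) (aval n s) (by omega)
    (fun i hi => by unfold aval; split_ifs <;> omega)
    (fun i h1 h2 => by omega)]
  have e : (n - (n-3+3)) * n = 0 := by
    have : n - (n-3+3) = 0 := by omega
    simp [this]
  rw [e]
  unfold aval
  split_ifs <;> omega

lemma wt_Bel (n q rem : ℕ) (hn : 4 ≤ n) (hq : q ≤ n-3) (hrem : rem ≤ n-1) :
    wt (Bel n q rem) = 2*n - 2 + n*q + rem := by
  unfold wt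
  have hcoe : ∀ i : Fin n, (Bel n q rem i : ℕ) = bval n q rem (i:ℕ) :=
    fun i => Bel_coe n q rem i hrem
  rw [Finset.sum_congr rfl (fun i _ => hcoe i), ← Finset.sum_range (fun i => bval n q rem i)]
  rw [sum_piece n (n-3-q) (bval n q rem) (by omega)
    (fun i hi => by unfold bval; split_ifs <;> omega)
    (fun i h1 h2 => by unfold bval; split_ifs <;> omega)]
  have e : (n - (n-3-q+3)) * n = n*q := by
    have h : n - (n-3-q+3) = q := by omega
    rw [h, mul_comm]
  rw [e]
  unfold bval
  split_ifs <;> omega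

lemma Ael_valid (n s : ℕ) (hn : 4 ≤ n) (hs1 : 1 ≤ s) (hs2 : s ≤ 2*n-3) (hs3 : s ≠ 2) :
    ValidB n (Ael n s) := by
  constructor
  · intro i j hij hjn hle
    have hi := Ael_coe n s i hs2
    have hj := Ael_coe n s j hs2
    rw [hj] at hjn hle
    rw [hi, hj]
    have hij' : (i:ℕ) < (j:ℕ) := hij
    have hjlt : (j:ℕ) < n := j.isLt
    clear hi hj
    unfold aval at hjn hle ⊢
    split_ifs at hjn hle ⊢ <;> omega
  · intro i h1 h2
    exfalso
    rw [Ael_coe n s i hs2] at h1 h2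
    have hilt : (i:ℕ) < n := i.isLt
    unfold aval at h1 h2
    split_ifs at h1 h2 <;> omega

set_option maxHeartbeats 1000000 in
lemma Bel_valid (n q rem : ℕ) (hn : 4 ≤ n) (hq : q ≤ n-3) (hrem : rem ≤ n-1) :
    ValidB n (Bel n q rem) := by
  constructor
  · intro i j hij hjn hle
    have hi := Bel_coe n q rem i hrem
    have hj := Bel_coe n q rem j hrem
    rw [hj] at hjn hle
    rw [hi, hj]
    have hij' : (i:ℕ) < (j:ℕ) := hij
    have hjlt : (j:ℕ) < n := j.isLt
    clear hi hj
    unfold bval at hjn hle ⊢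
    split_ifs at hjn hle ⊢ <;> omega
  · intro i h1 h2
    rw [Bel_coe n q rem i hrem] at h1 h2
    have hilt : (i:ℕ) < n := i.isLt
    have gen : ∀ j : Fin n, (j:ℕ) = n + (i:ℕ) - bval n q rem (i:ℕ) →
        (Bel n q rem j : ℕ) = n := by
      intro j hjval
      rw [Bel_coe n q rem j hrem, hjval]
      unfold bval at h1 h2 ⊢
      split_ifs at h1 h2 ⊢ <;> omega
    exact gen _ (by simp only [Fin.val_mk]; rw [Bel_coe n q rem i hrem])
lemma aval_mono (n s s' i : ℕ) (hn : 4 ≤ n) (h : s ≤ s') (h1 : 1 ≤ s) (h2 : s' ≤ 2*n-3) :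
    aval n s i ≤ aval n s' i := by
  unfold aval; split_ifs <;> omega

lemma Ael_mono (n s s' : ℕ) (hn : 4 ≤ n) (h : s ≤ s') (h1 : 1 ≤ s) (h2 : s' ≤ 2*n-3) :
    Ael n s ≤ Ael n s' := by
  intro i
  show (Ael n s i : ℕ) ≤ (Ael n s' i : ℕ)
  rw [Ael_coe n s i (by omega), Ael_coe n s' i h2]
  exact aval_mono n s s' _ hn h h1 h2

lemma aval_le_bval (n s q rem i : ℕ) (hn : 4 ≤ n) (hs : s ≤ 2*n-3) (hq : q ≤ n-3)
    (hrem : rem ≤ n-1) (hi : i < n) : aval n s i ≤ bval n q rem i := by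
  unfold aval bval; split_ifs <;> omega

lemma Ael_le_Bel (n s q rem : ℕ) (hn : 4 ≤ n) (hs : s ≤ 2*n-3) (hq : q ≤ n-3)
    (hrem : rem ≤ n-1) : Ael n s ≤ Bel n q rem := by
  intro i
  show (Ael n s i : ℕ) ≤ (Bel n q rem i : ℕ)
  rw [Ael_coe n s i hs, Bel_coe n q rem i hrem]
  exact aval_le_bval n s q rem _ hn hs hq hrem i.isLt

lemma bval_mono (n q rem q' rem' i : ℕ) (hn : 4 ≤ n) (hq' : q' ≤ n-3) (hrem : rem ≤ n-1)
    (hrem' : rem' ≤ n-1) (h : q < q' ∨ (q = q' ∧ rem ≤ rem')) (hi : i < n) :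
    bval n q rem i ≤ bval n q' rem' i := by
  unfold bval; split_ifs <;> omega

lemma Bel_mono (n q rem q' rem' : ℕ) (hn : 4 ≤ n) (hq' : q' ≤ n-3) (hrem : rem ≤ n-1)
    (hrem' : rem' ≤ n-1) (h : q < q' ∨ (q = q' ∧ rem ≤ rem')) :
    Bel n q rem ≤ Bel n q' rem' := by
  intro i
  show (Bel n q rem i : ℕ) ≤ (Bel n q' rem' i : ℕ)
  rw [Bel_coe n q rem i hrem, Bel_coe n q' rem' i hrem']
  exact bval_mono n q rem q' rem' _ hn hq' hrem hrem' h i.isLt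

def S1 (n : ℕ) : Finset ℕ := insert 1 (Finset.Icc 3 (2*n-3))

lemma mem_S1 {n s : ℕ} (hn : 4 ≤ n) :
    s ∈ S1 n ↔ (1 ≤ s ∧ s ≤ 2*n-3 ∧ s ≠ 2) := by
  simp only [S1, Finset.mem_insert, Finset.mem_Icc]
  omega

def C1 (n : ℕ) : Finset (Fin n → Fin (n+1)) := (Finset.range (n*n+1)).image (stair n)

def C2 (n : ℕ) : Finset (Fin n → Fin (n+1)) :=
  (S1 n).image (Ael n) ∪
  ((Finset.range (n-2)) ×ˢ (Finset.range n)).image (fun p => Bel n p.1 p.2)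

lemma card_C1 (n : ℕ) : (C1 n).card = n*n+1 := by
  rw [C1, Finset.card_image_of_injOn, Finset.card_range]
  intro a ha b hb hab
  have : wt (stair n a) = wt (stair n b) := by rw [hab]
  rw [wt_stair, wt_stair] at this
  simp only [Finset.mem_coe, Finset.mem_range] at ha hb
  omega

lemma card_C2 (n : ℕ) (hn : 4 ≤ n) : (C2 n).card = n*n-4 := by
  have hinjA : Set.InjOn (Ael n) (S1 n) := by
    intro a ha b hb hab
    have ha' : a ∈ S1 n := ha
    have hb' : b ∈ S1 n := hb
    rw [mem_S1 hn] at ha' hb'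
    replace ha := ha'; replace hb := hb'
    have : wt (Ael n a) = wt (Ael n b) := by rw [hab]
    rw [wt_Ael n a hn ha.1 ha.2.1, wt_Ael n b hn hb.1 hb.2.1] at this
    exact this
  have hinjB : Set.InjOn (fun p : ℕ × ℕ => Bel n p.1 p.2)
      (((Finset.range (n-2)) ×ˢ (Finset.range n) : Finset (ℕ × ℕ)) : Set (ℕ × ℕ)) := by
    intro p hp p' hp' hee
    have hp2 : p ∈ (Finset.range (n-2)) ×ˢ (Finset.range n) := hp
    have hp2' : p' ∈ (Finset.range (n-2)) ×ˢ (Finset.range n) := hp'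
    simp only [Finset.mem_product, Finset.mem_range] at hp2 hp2'
    replace hp := hp2; replace hp' := hp2'
    have hw : wt (Bel n p.1 p.2) = wt (Bel n p'.1 p'.2) := congrArg wt hee
    rw [wt_Bel n _ _ hn (by omega) (by omega), wt_Bel n _ _ hn (by omega) (by omega)] at hw
    have hpp : p.1 = p'.1 := by
      rcases Nat.lt_trichotomy p.1 p'.1 with h | h | h
      · exfalso
        have h2 : p.1 + 1 ≤ p'.1 := h
        have h3 := Nat.mul_le_mul_left n h2
        have e : n * (p.1+1) = n*p.1 + n := by ring
        omega
      · exact h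
      · exfalso
        have h2 : p'.1 + 1 ≤ p.1 := h
        have h3 := Nat.mul_le_mul_left n h2
        have e : n * (p'.1+1) = n*p'.1 + n := by ring
        omega
    refine Prod.ext hpp ?_
    rw [hpp] at hw; omega
  have hdisj : Disjoint ((S1 n).image (Ael n))
      (((Finset.range (n-2)) ×ˢ (Finset.range n)).image (fun p => Bel n p.1 p.2)) := by
    rw [Finset.disjoint_left]
    intro x hx hx'
    simp only [Finset.mem_image, Finset.mem_product, Finset.mem_range] at hx hx'
    obtain ⟨s, hs, rfl⟩ := hx
    obtain ⟨p, hp, hpe⟩ := hx'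
    rw [mem_S1 hn] at hs
    have : wt (Ael n s) = wt (Bel n p.1 p.2) := by rw [hpe]
    rw [wt_Ael n s hn hs.1 hs.2.1, wt_Bel n _ _ hn (by omega) (by omega)] at this
    omega
  rw [C2, Finset.card_union_of_disjoint hdisj, Finset.card_image_of_injOn hinjA,
    Finset.card_image_of_injOn hinjB, Finset.card_product, Finset.card_range,
    Finset.card_range]
  have hS1 : (S1 n).card = 2*n-4 := by
    rw [S1, Finset.card_insert_of_notMem (by simp only [Finset.mem_Icc]; omega), Nat.card_Icc]
    omega
  rw [hS1, Nat.sub_mul]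
  have h1 : 2*n ≤ n*n := by nlinarith
  omega
lemma stair_coe (n m : ℕ) (i : Fin n) :
    (stair n m i : ℕ) = min n (m - n*(n-1-(i:ℕ))) := rfl

lemma stair_ne_Ael (n s m : ℕ) (hn : 4 ≤ n) (hs1 : 1 ≤ s) (hs2 : s ≤ 2*n-3) :
    stair n m ≠ Ael n s := by
  intro h
  have hw : wt (stair n m) = wt (Ael n s) := by rw [h]
  rw [wt_stair, wt_Ael n s hn hs1 hs2] at hw
  have hmin : min (n*n) m = m := by
    have h1 : 2*n ≤ n*n := by nlinarith
    omega
  rw [hmin] at hw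
  subst hw
  by_cases hsn : m ≤ n
  · have hc := congrArg (fun r => (r (⟨n-2, by omega⟩ : Fin n) : ℕ)) h
    rw [stair_coe, Ael_coe n m _ hs2] at hc
    have e1 : (((⟨n-2, by omega⟩ : Fin n)) : ℕ) = n-2 := rfl
    rw [e1] at hc
    have e2 : n - 1 - (n-2) = 1 := by omega
    rw [e2, mul_one] at hc
    unfold aval at hc
    split_ifs at hc <;> omega
  · have hc := congrArg (fun r => (r (⟨n-1, by omega⟩ : Fin n) : ℕ)) h
    rw [stair_coe, Ael_coe n m _ hs2] at hc
    have e1 : (((⟨n-1, by omega⟩ : Fin n)) : ℕ) = n-1 := rfl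
    rw [e1] at hc
    have e2 : n - 1 - (n-1) = 0 := by omega
    rw [e2, mul_zero] at hc
    unfold aval at hc
    split_ifs at hc <;> omega

lemma stair_ne_Bel (n q rem m : ℕ) (hn : 4 ≤ n) (hq : q ≤ n-3) (hrem : rem ≤ n-1) :
    stair n m ≠ Bel n q rem := by
  intro h
  have hw : wt (stair n m) = wt (Bel n q rem) := by rw [h]
  rw [wt_stair, wt_Bel n q rem hn hq hrem] at hw
  have hnq : n*q ≤ n*(n-3) := Nat.mul_le_mul_left n hq
  have e0 : n*(n-3) = n*n - 3*n := by rw [mul_comm, Nat.sub_mul, mul_comm]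
  have hmin : m = 2*n-2 + n*q + rem := by
    have h1 : 4*n ≤ n*n := by nlinarith
    omega
  have hc := congrArg (fun r => (r (⟨n-3-q, by omega⟩ : Fin n) : ℕ)) h
  rw [stair_coe, Bel_coe n q rem _ hrem] at hc
  have e1 : (((⟨n-3-q, by omega⟩ : Fin n)) : ℕ) = n-3-q := rfl
  rw [e1] at hc
  have e2 : n - 1 - (n-3-q) = q+2 := by omega
  rw [e2] at hc
  have e3 : n*(q+2) = n*q + 2*n := by ring
  rw [e3] at hc
  unfold bval at hc
  split_ifs at hc <;> omega

lemma C1_C2_disjoint (n : ℕ) (hn : 4 ≤ n) : Disjoint (C1 n) (C2 n) := by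
  rw [Finset.disjoint_left]
  intro x hx hx'
  simp only [C1, C2, Finset.mem_image, Finset.mem_union, Finset.mem_product,
    Finset.mem_range] at hx hx'
  obtain ⟨m, hm, rfl⟩ := hx
  rcases hx' with ⟨s, hs, he⟩ | ⟨p, hp, he⟩
  · rw [mem_S1 hn] at hs
    exact stair_ne_Ael n s m hn hs.1 hs.2.1 he.symm
  · exact stair_ne_Bel n p.1 p.2 m hn (by omega) (by omega) he.symm

lemma C1_valid (n : ℕ) : ∀ r ∈ C1 n, ValidB n r := by
  intro r hr
  simp only [C1, Finset.mem_image, Finset.mem_range] at hr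
  obtain ⟨m, _, rfl⟩ := hr
  exact stair_valid n m

lemma C2_valid (n : ℕ) (hn : 4 ≤ n) : ∀ r ∈ C2 n, ValidB n r := by
  intro r hr
  simp only [C2, Finset.mem_image, Finset.mem_union, Finset.mem_product,
    Finset.mem_range] at hr
  rcases hr with ⟨s, hs, rfl⟩ | ⟨p, hp, rfl⟩
  · rw [mem_S1 hn] at hs
    exact Ael_valid n s hn hs.1 hs.2.1 hs.2.2
  · exact Bel_valid n p.1 p.2 hn (by omega) (by omega)

lemma C1_chain (n : ℕ) : IsChain (· ≤ ·) ((C1 n : Set (Fin n → Fin (n+1)))) := by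
  intro x hx y hy _
  have hx' : x ∈ C1 n := hx
  have hy' : y ∈ C1 n := hy
  simp only [C1, Finset.mem_image, Finset.mem_range] at hx' hy'
  obtain ⟨a, _, rfl⟩ := hx'
  obtain ⟨b, _, rfl⟩ := hy'
  rcases le_total a b with h | h
  · exact Or.inl (stair_mono h)
  · exact Or.inr (stair_mono h)

lemma C2_chain (n : ℕ) (hn : 4 ≤ n) : IsChain (· ≤ ·) ((C2 n : Set (Fin n → Fin (n+1)))) := by
  intro x hx y hy _
  have hx' : x ∈ C2 n := hx
  have hy' : y ∈ C2 n := hy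
  simp only [C2, Finset.mem_union, Finset.mem_image, Finset.mem_product,
    Finset.mem_range] at hx' hy'
  rcases hx' with ⟨s, hs, rfl⟩ | ⟨p, hp, rfl⟩ <;>
    rcases hy' with ⟨s', hs', rfl⟩ | ⟨p', hp', rfl⟩
  · rw [mem_S1 hn] at hs hs'
    rcases le_total s s' with h | h
    · exact Or.inl (Ael_mono n s s' hn h hs.1 hs'.2.1)
    · exact Or.inr (Ael_mono n s' s hn h hs'.1 hs.2.1)
  · rw [mem_S1 hn] at hs
    exact Or.inl (Ael_le_Bel n s p'.1 p'.2 hn hs.2.1 (by omega) (by omega))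
  · rw [mem_S1 hn] at hs'
    exact Or.inr (Ael_le_Bel n s' p.1 p.2 hn hs'.2.1 (by omega) (by omega))
  · rcases Nat.lt_trichotomy p.1 p'.1 with h | h | h
    · exact Or.inl (Bel_mono n p.1 p.2 p'.1 p'.2 hn (by omega) (by omega) (by omega) (Or.inl h))
    · rcases le_total p.2 p'.2 with h2 | h2
      · exact Or.inl (Bel_mono n p.1 p.2 p'.1 p'.2 hn (by omega) (by omega) (by omega)
          (Or.inr ⟨h, h2⟩))
      · exact Or.inr (Bel_mono n p'.1 p'.2 p.1 p.2 hn (by omega) (by omega) (by omega)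
          (Or.inr ⟨h.symm, h2⟩))
    · exact Or.inr (Bel_mono n p'.1 p'.2 p.1 p.2 hn (by omega) (by omega) (by omega) (Or.inl h))

lemma exists_part (n : ℕ) (hn : 4 ≤ n) :
    ∃ C₁ C₂ : Finset (Fin n → Fin (n+1)),
      (∀ r ∈ C₁, ValidB n r) ∧ (∀ r ∈ C₂, ValidB n r) ∧
      IsChain (· ≤ ·) (C₁ : Set (Fin n → Fin (n+1))) ∧
      IsChain (· ≤ ·) (C₂ : Set (Fin n → Fin (n+1))) ∧
      (C₁ ∪ C₂).card = 2 * n ^ 2 - 3 := by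
  refine ⟨C1 n, C2 n, C1_valid n, C2_valid n hn, C1_chain n, C2_chain n hn, ?_⟩
  rw [Finset.card_union_of_disjoint (C1_C2_disjoint n hn), card_C1, card_C2 n hn]
  have e : n^2 = n*n := sq n
  have h16 : 16 ≤ n*n := Nat.mul_le_mul hn hn
  omega
lemma wt_mono {n : ℕ} {r s : Fin n → Fin (n+1)} (h : r ≤ s) : wt r ≤ wt s :=
  Finset.sum_le_sum (fun i _ => h i)

lemma wt_split {n : ℕ} (r : Fin n → Fin (n+1)) (s : Finset (Fin n)) :
    wt r ≤ (∑ i ∈ s, (r i : ℕ)) + (n - s.card) * n := by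
  have h1 : (∑ i ∈ s, (r i : ℕ)) + (∑ i ∈ sᶜ, (r i : ℕ)) = wt r :=
    Finset.sum_add_sum_compl s _
  have h2 : ∑ i ∈ sᶜ, (r i : ℕ) ≤ sᶜ.card * n :=
    Finset.sum_le_card_nsmul _ _ n (fun i _ => by omega)
  have h3 : sᶜ.card = n - s.card := by
    rw [Finset.card_compl, Fintype.card_fin]
  rw [h3] at h2
  omega

lemma rest_eq_n {n : ℕ} (r : Fin n → Fin (n+1)) (s : Finset (Fin n))
    (h : (∑ i ∈ s, (r i : ℕ)) + (n - s.card) * n ≤ wt r) (hcard : s.card ≤ n) :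
    ∀ i, i ∉ s → (r i : ℕ) = n := by
  have h1 : (∑ i ∈ s, (r i : ℕ)) + (∑ i ∈ sᶜ, (r i : ℕ)) = wt r :=
    Finset.sum_add_sum_compl s _
  have h3 : sᶜ.card = n - s.card := by rw [Finset.card_compl, Fintype.card_fin]
  have h2 : ∑ i ∈ sᶜ, (r i : ℕ) = ∑ i ∈ sᶜ, n := by
    rw [Finset.sum_const, smul_eq_mul, h3]
    have hb : ∑ i ∈ sᶜ, (r i : ℕ) ≤ sᶜ.card * n :=
      Finset.sum_le_card_nsmul _ _ n (fun i _ => by omega)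
    rw [h3] at hb
    omega
  intro i hi
  have := (Finset.sum_eq_sum_iff_of_le (fun i _ => by omega : ∀ i ∈ sᶜ, (r i : ℕ) ≤ n)).mp h2
  exact this i (Finset.mem_compl.mpr hi)

lemma level_0 {n : ℕ} {r : Fin n → Fin (n+1)} (h : wt r = 0) : ∀ i, (r i : ℕ) = 0 := by
  intro i
  have := Finset.sum_eq_zero_iff.mp h
  exact this i (Finset.mem_univ i)

lemma level_top {n : ℕ} {r : Fin n → Fin (n+1)} (h : wt r = n*n) : ∀ i, (r i : ℕ) = n := by
  have h0 : (∑ i ∈ (∅ : Finset (Fin n)), (r i : ℕ)) + (n - 0) * n ≤ wt r := by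
    simp [h]
  intro i
  exact rest_eq_n r ∅ (by simpa using h0) (by simp) i (Finset.notMem_empty i)

lemma card_pair {n : ℕ} (i0 i1 : Fin n) (hne : i0 ≠ i1) :
    ({i0, i1} : Finset (Fin n)).card = 2 := by
  rw [Finset.card_insert_of_notMem (by simp [hne]), Finset.card_singleton]

lemma sum_pair {n : ℕ} (r : Fin n → Fin (n+1)) (i0 i1 : Fin n) (hne : i0 ≠ i1) :
    ∑ i ∈ ({i0, i1} : Finset (Fin n)), (r i : ℕ) = (r i0 : ℕ) + (r i1 : ℕ) := by
  rw [Finset.sum_insert (by simp [hne]), Finset.sum_singleton]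

/-- at level n*n-1 the element is unique -/
lemma level_N1 {n : ℕ} (hn : 4 ≤ n) {r : Fin n → Fin (n+1)} (hv : ValidB n r)
    (h : wt r = n*n-1) : ∀ i : Fin n, (r i : ℕ) = if (i:ℕ) = 0 then n-1 else n := by
  have hnn : 16 ≤ n*n := Nat.mul_le_mul hn hn
  -- there is a coordinate < n
  have hex : ∃ i0 : Fin n, (r i0 : ℕ) < n := by
    by_contra hc
    push_neg at hc
    have : wt r = n*n := by
      have : ∀ i : Fin n, (r i : ℕ) = n := fun i => by have := hc i; omega
      unfold wt
      rw [Finset.sum_congr rfl (fun i _ => this i)]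
      simp [mul_comm]
    omega
  obtain ⟨i0, hi0⟩ := hex
  -- all others are n
  have hrest : ∀ i, i ≠ i0 → (r i : ℕ) = n := by
    by_contra hc
    push_neg at hc
    obtain ⟨i1, hne, hi1⟩ := hc
    have hi1' : (r i1 : ℕ) < n := by
      have : (r i1 : ℕ) ≤ n := by omega
      omega
    have hs := wt_split r {i0, i1}
    rw [sum_pair r i0 i1 (Ne.symm hne), card_pair i0 i1 (Ne.symm hne)] at hs
    have e : (n-2)*n = n*n - 2*n := by rw [Nat.sub_mul]
    have h2n : 4*n ≤ n*n := by nlinarith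
    omega
  -- r i0 = n-1
  have hval : (r i0 : ℕ) = n-1 := by
    have hs := wt_split r {i0}
    rw [Finset.sum_singleton, Finset.card_singleton] at hs
    have h1 : (∑ i ∈ ({i0} : Finset (Fin n)), (r i : ℕ)) + (∑ i ∈ ({i0}ᶜ : Finset (Fin n)), (r i : ℕ)) = wt r :=
      Finset.sum_add_sum_compl _ _
    have h2 : ∑ i ∈ ({i0}ᶜ : Finset (Fin n)), (r i : ℕ) = ∑ i ∈ ({i0}ᶜ : Finset (Fin n)), n :=
      Finset.sum_congr rfl (fun i hi => hrest i (by simpa using hi))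
    rw [Finset.sum_const, smul_eq_mul, Finset.card_compl, Fintype.card_fin,
      Finset.card_singleton] at h2
    rw [Finset.sum_singleton] at h1
    have e : (n-1)*n = n*n - n := by rw [Nat.sub_mul, one_mul]
    have h2n : 4*n ≤ n*n := by nlinarith
    omega
  -- i0 = 0
  have hi00 : (i0 : ℕ) = 0 := by
    by_contra hc
    have hlt := i0.isLt
    have hprev : (⟨(i0:ℕ)-1, by omega⟩ : Fin n) ≠ i0 := by
      intro he
      have := congrArg (fun x : Fin n => (x:ℕ)) he
      simp at this
      omega
    have := hv.1 ⟨(i0:ℕ)-1, by omega⟩ i0 (by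
      show ((⟨(i0:ℕ)-1, by omega⟩ : Fin n) : ℕ) < (i0:ℕ)
      simp
      omega) (by omega) (by
        show (i0:ℕ) - ((⟨(i0:ℕ)-1, by omega⟩ : Fin n) : ℕ) ≤ (r i0 : ℕ)
        simp
        omega)
    have hp := hrest _ hprev
    simp at this
    omega
  intro i
  by_cases hi : i = i0
  · subst hi
    simp [hi00, hval]
  · have := hrest i hi
    have hine : (i:ℕ) ≠ 0 := by
      intro hc
      apply hi
      apply Fin.ext
      omega
    simp [hine, this]
lemma card_triple {n : ℕ} (i0 i1 i2 : Fin n) (h01 : i0 ≠ i1) (h02 : i0 ≠ i2) (h12 : i1 ≠ i2) :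
    ({i0, i1, i2} : Finset (Fin n)).card = 3 := by
  rw [Finset.card_insert_of_notMem (by simp [h01, h02]),
    Finset.card_insert_of_notMem (by simp [h12]), Finset.card_singleton]

lemma sum_triple {n : ℕ} (r : Fin n → Fin (n+1)) (i0 i1 i2 : Fin n)
    (h01 : i0 ≠ i1) (h02 : i0 ≠ i2) (h12 : i1 ≠ i2) :
    ∑ i ∈ ({i0, i1, i2} : Finset (Fin n)), (r i : ℕ)
      = (r i0 : ℕ) + (r i1 : ℕ) + (r i2 : ℕ) := by
  rw [Finset.sum_insert (by simp [h01, h02]), Finset.sum_insert (by simp [h12]),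
    Finset.sum_singleton]
  ring

lemma level_N2 {n : ℕ} (hn : 4 ≤ n) {r : Fin n → Fin (n+1)} (hv : ValidB n r)
    (h : wt r = n*n-2) : ∀ i : Fin n, (r i : ℕ) = if (i:ℕ) = 0 then n-2 else n := by
  have hnn : 16 ≤ n*n := Nat.mul_le_mul hn hn
  have h2n : 4*n ≤ n*n := by nlinarith
  have hex : ∃ i0 : Fin n, (r i0 : ℕ) < n := by
    by_contra hc
    push_neg at hc
    have hall : ∀ i : Fin n, (r i : ℕ) = n := fun i => by have := hc i; omega
    have : wt r = n*n := by
      unfold wt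
      rw [Finset.sum_congr rfl (fun i _ => hall i)]
      simp [mul_comm]
    omega
  obtain ⟨i0, hi0⟩ := hex
  by_cases hB : ∀ i, i ≠ i0 → (r i : ℕ) = n
  · -- single deficit of 2 at i0
    have hval : (r i0 : ℕ) = n-2 := by
      have h1 : (∑ i ∈ ({i0} : Finset (Fin n)), (r i : ℕ)) + (∑ i ∈ ({i0}ᶜ : Finset (Fin n)), (r i : ℕ)) = wt r :=
        Finset.sum_add_sum_compl _ _
      have h2 : ∑ i ∈ ({i0}ᶜ : Finset (Fin n)), (r i : ℕ) = ∑ i ∈ ({i0}ᶜ : Finset (Fin n)), n :=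
        Finset.sum_congr rfl (fun i hi => hB i (by simpa using hi))
      rw [Finset.sum_const, smul_eq_mul, Finset.card_compl, Fintype.card_fin,
        Finset.card_singleton] at h2
      rw [Finset.sum_singleton] at h1
      have e : (n-1)*n = n*n - n := by rw [Nat.sub_mul, one_mul]
      omega
    have hi00 : (i0 : ℕ) = 0 := by
      by_contra hc
      have hlt := i0.isLt
      have hprev : (⟨(i0:ℕ)-1, by omega⟩ : Fin n) ≠ i0 := by
        intro he
        have := congrArg (fun x : Fin n => (x:ℕ)) he
        simp at this
        omega
      have hcond := hv.1 ⟨(i0:ℕ)-1, by omega⟩ i0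
        (by rw [Fin.lt_def]; simp; omega) (by omega)
        (by simp; omega)
      have hp := hB _ hprev
      simp at hcond
      omega
    intro i
    by_cases hi : i = i0
    · subst hi; simp [hi00, hval]
    · have := hB i hi
      have hine : (i:ℕ) ≠ 0 := by
        intro hc; exact hi (Fin.ext (by omega))
      simp [hine, this]
  · -- two deficits of 1 : impossible
    exfalso
    push_neg at hB
    obtain ⟨i1, hne, hi1⟩ := hB
    have hi1' : (r i1 : ℕ) < n := by have hb := (r i1).isLt; omega
    have hs := wt_split r {i0, i1}
    rw [sum_pair r i0 i1 (Ne.symm hne), card_pair i0 i1 (Ne.symm hne)] at hs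
    have e : (n-2)*n = n*n - 2*n := by rw [Nat.sub_mul]
    have hv0 : (r i0 : ℕ) = n-1 := by omega
    have hv1 : (r i1 : ℕ) = n-1 := by omega
    have hrest : ∀ i, i ≠ i0 → i ≠ i1 → (r i : ℕ) = n := by
      intro i2 h20 h21
      by_contra hc2
      have hi2' : (r i2 : ℕ) < n := by have hb := (r i2).isLt; omega
      have hs3 := wt_split r {i0, i1, i2}
      rw [sum_triple r i0 i1 i2 (Ne.symm hne) (Ne.symm h20) (Ne.symm h21),
        card_triple i0 i1 i2 (Ne.symm hne) (Ne.symm h20) (Ne.symm h21)] at hs3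
      have e3 : (n-3)*n = n*n - 3*n := by rw [Nat.sub_mul]
      omega
    -- let v be the larger of i0 i1
    rcases Nat.lt_or_ge (i0:ℕ) (i1:ℕ) with hlt | hge
    · -- i1 is larger; consider i1 - 1
      have hprev : ((⟨(i1:ℕ)-1, by have := i1.isLt; omega⟩ : Fin n) : ℕ) = (i1:ℕ)-1 := rfl
      have hcond := hv.1 ⟨(i1:ℕ)-1, by have := i1.isLt; omega⟩ i1
        (by rw [Fin.lt_def]; simp; omega) (by omega) (by simp; omega)
      simp only [hprev] at hcond
      have : (r ⟨(i1:ℕ)-1, by have := i1.isLt; omega⟩ : ℕ) ≥ n-1 := by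
        by_cases he : (⟨(i1:ℕ)-1, by have := i1.isLt; omega⟩ : Fin n) = i0
        · rw [he, hv0]
        · rw [hrest _ he (by intro hc; have := congrArg (fun x : Fin n => (x:ℕ)) hc; simp at this; omega)]
          omega
      omega
    · have hlt' : (i1:ℕ) < (i0:ℕ) := by
        rcases Nat.lt_or_ge (i1:ℕ) (i0:ℕ) with h | h
        · exact h
        · exfalso; exact hne (Fin.ext (by omega)).symm
      have hprev : ((⟨(i0:ℕ)-1, by have := i0.isLt; omega⟩ : Fin n) : ℕ) = (i0:ℕ)-1 := rfl
      have hcond := hv.1 ⟨(i0:ℕ)-1, by have := i0.isLt; omega⟩ i0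
        (by rw [Fin.lt_def]; simp; omega) (by omega) (by simp; omega)
      simp only [hprev] at hcond
      have : (r ⟨(i0:ℕ)-1, by have := i0.isLt; omega⟩ : ℕ) ≥ n-1 := by
        by_cases he : (⟨(i0:ℕ)-1, by have := i0.isLt; omega⟩ : Fin n) = i1
        · rw [he, hv1]
        · rw [hrest _ (by intro hc; have := congrArg (fun x : Fin n => (x:ℕ)) hc; simp at this; omega) he]
          omega
      omega

lemma pred_bound {n : ℕ} {r : Fin n → Fin (n+1)} (hv : ValidB n r) (i j : Fin n)
    (hij : (i:ℕ)+1 = (j:ℕ)) (hlt : (r j:ℕ) < n) (hge : 1 ≤ (r j : ℕ)) :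
    (r i : ℕ) + 1 ≤ (r j : ℕ) := by
  have := hv.1 i j (Fin.lt_def.mpr (by omega)) hlt (by omega)
  omega

lemma level_N3 {n : ℕ} (hn : 4 ≤ n) {r : Fin n → Fin (n+1)} (hv : ValidB n r)
    (h : wt r = n*n-3) : (r ⟨n-1, by omega⟩ : ℕ) = n := by
  have hnn : 16 ≤ n*n := Nat.mul_le_mul hn hn
  have h2n : 4*n ≤ n*n := by nlinarith
  obtain ⟨ib, hib⟩ : ∃ i : Fin n, (i:ℕ) = n-1 := ⟨⟨n-1, by omega⟩, rfl⟩
  obtain ⟨ia, hia⟩ : ∃ i : Fin n, (i:ℕ) = n-2 := ⟨⟨n-2, by omega⟩, rfl⟩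
  obtain ⟨ic, hic⟩ : ∃ i : Fin n, (i:ℕ) = n-3 := ⟨⟨n-3, by omega⟩, rfl⟩
  have hgoal : (⟨n-1, by omega⟩ : Fin n) = ib := Fin.ext (by simp only [Fin.val_mk, hib])
  rw [hgoal]
  by_contra hc
  have hab : ia ≠ ib := fun he => by rw [he] at hia; omega
  have hcb : ic ≠ ib := fun he => by rw [he] at hic; omega
  have hca : ic ≠ ia := fun he => by rw [he] at hic; omega
  have hb_lt : (r ib : ℕ) < n := by have hb := (r ib).isLt; omega
  have hb_ge : n-3 ≤ (r ib : ℕ) := by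
    have hs := wt_split r {ib}
    rw [Finset.sum_singleton, Finset.card_singleton] at hs
    have e : (n-1)*n = n*n - n := by rw [Nat.sub_mul, one_mul]
    omega
  have hcond1 := pred_bound hv ia ib (by omega) hb_lt (by omega)
  have hs2 := wt_split r {ia, ib}
  rw [sum_pair r ia ib hab, card_pair ia ib hab] at hs2
  have e : (n-2)*n = n*n - 2*n := by rw [Nat.sub_mul]
  have hbv : (r ib : ℕ) = n-1 := by omega
  have hav : (r ia : ℕ) = n-2 := by omega
  have hrest : ∀ i, i ≠ ia → i ≠ ib → (r i : ℕ) = n := by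
    intro i2 h2a h2b
    by_contra hc2
    have hi2' : (r i2 : ℕ) < n := by have hb := (r i2).isLt; omega
    have hs3 := wt_split r {ia, ib, i2}
    rw [sum_triple r ia ib i2 hab (Ne.symm h2a) (Ne.symm h2b),
      card_triple ia ib i2 hab (Ne.symm h2a) (Ne.symm h2b)] at hs3
    have e3 : (n-3)*n = n*n - 3*n := by rw [Nat.sub_mul]
    omega
  have hcv : (r ic : ℕ) = n := hrest ic hca hcb
  have hcond2 := pred_bound hv ic ia (by omega) (by omega) (by omega)
  omega
lemma unit_step {n : ℕ} {r s : Fin n → Fin (n+1)} (hle : r ≤ s) (hw : wt s = wt r + 1) :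
    ∀ i, (s i : ℕ) ≤ (r i : ℕ) + 1 := by
  intro i0
  by_contra hc
  push_neg at hc
  have h1 : ∑ i ∈ Finset.univ.erase i0, (r i : ℕ) ≤ ∑ i ∈ Finset.univ.erase i0, (s i : ℕ) :=
    Finset.sum_le_sum (fun i _ => hle i)
  have h2 : ∑ i ∈ Finset.univ.erase i0, (r i : ℕ) + (r i0 : ℕ) = wt r :=
    Finset.sum_erase_add _ _ (Finset.mem_univ i0)
  have h3 : ∑ i ∈ Finset.univ.erase i0, (s i : ℕ) + (s i0 : ℕ) = wt s :=
    Finset.sum_erase_add _ _ (Finset.mem_univ i0)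
  omega

lemma sum_eq_one {n : ℕ} {r : Fin n → Fin (n+1)} (h : wt r = 1) :
    ∃ j : Fin n, (r j : ℕ) = 1 ∧ ∀ i, i ≠ j → (r i : ℕ) = 0 := by
  have hne : wt r ≠ 0 := by omega
  obtain ⟨j, _, hj⟩ := Finset.exists_ne_zero_of_sum_ne_zero hne
  have hj1 : (r j : ℕ) ≤ 1 := by
    have hs := Finset.single_le_sum (f := fun i => ((r i : ℕ))) (fun i _ => Nat.zero_le _)
      (Finset.mem_univ j)
    unfold wt at h
    omega
  have hjv : (r j : ℕ) = 1 := by omega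
  refine ⟨j, hjv, ?_⟩
  have h2 : ∑ i ∈ Finset.univ.erase j, (r i : ℕ) + (r j : ℕ) = wt r :=
    Finset.sum_erase_add _ _ (Finset.mem_univ j)
  have h3 : ∑ i ∈ Finset.univ.erase j, (r i : ℕ) = 0 := by omega
  intro i hi
  exact Finset.sum_eq_zero_iff.mp h3 i (Finset.mem_erase.mpr ⟨hi, Finset.mem_univ i⟩)

/-- discrete intermediate value theorem -/
lemma discrete_ivt (c : ℕ → ℕ) (lo : ℕ) : ∀ d v, c lo ≤ v → v ≤ c (lo + d) →
    (∀ s, lo ≤ s → s < lo + d → c (s+1) ≤ c s + 1) →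
    ∃ s, lo ≤ s ∧ s ≤ lo + d ∧ c s = v := by
  intro d
  induction d with
  | zero =>
    intro v h1 h2 _
    simp only [Nat.add_zero] at h2
    exact ⟨lo, le_refl _, le_refl _, by omega⟩
  | succ m ih =>
    intro v h1 h2 hstep
    rcases le_or_gt v (c (lo+m)) with h | h
    · obtain ⟨s, hs1, hs2, hs3⟩ := ih v h1 h (fun s a b => hstep s a (by omega))
      exact ⟨s, hs1, by omega, hs3⟩
    · have hh := hstep (lo+m) (by omega) (by omega)
      have he : lo + (m+1) = (lo+m)+1 := by omega
      rw [he] at h2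
      exact ⟨(lo+m)+1, by omega, by omega, by omega⟩

/-- Claim A : a chain visiting every level 1..n²-3 must start at (0,...,0,1) -/
lemma claimA {n : ℕ} (hn : 4 ≤ n) (a : ℕ → (Fin n → Fin (n+1)))
    (hv : ∀ s, 1 ≤ s → s ≤ n*n-3 → ValidB n (a s))
    (hw : ∀ s, 1 ≤ s → s ≤ n*n-3 → wt (a s) = s)
    (hm : ∀ s, 1 ≤ s → s+1 ≤ n*n-3 → a s ≤ a (s+1)) :
    ∀ i : Fin n, ((a 1) i : ℕ) = if (i:ℕ) = n-1 then 1 else 0 := by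
  have hnn : 16 ≤ n*n := Nat.mul_le_mul hn hn
  obtain ⟨j, hj1, hj0⟩ := sum_eq_one (hw 1 (by omega) (by omega))
  -- monotone extension
  have hmono : ∀ d s, 1 ≤ s → s+d ≤ n*n-3 → a s ≤ a (s+d) := by
    intro d
    induction d with
    | zero => intro s _ _; exact le_refl _
    | succ m ih =>
      intro s hs1 hsd
      calc a s ≤ a (s+m) := ih s hs1 (by omega)
        _ ≤ a (s+m+1) := hm (s+m) (by omega) (by omega)
  -- j ≠ 0
  have hj_ne0 : (j:ℕ) ≠ 0 := by
    intro hc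
    have hcoord := (hv 1 (by omega) (by omega)).2 j (by omega) (by omega)
    set idx : Fin n := ⟨n + (j:ℕ) - ((a 1) j : ℕ), by have := j.isLt; omega⟩ with hidx
    have hle1 : ((a 1) idx : ℕ) ≤ 1 := by
      by_cases he : idx = j
      · rw [he]; omega
      · rw [hj0 idx he]; omega
    omega
  by_cases hj_top : (j:ℕ) = n-1
  · intro i
    by_cases hi : i = j
    · subst hi; simp [hj_top, hj1]
    · have hine : (i:ℕ) ≠ n-1 := by
        intro hc; exact hi (Fin.ext (by omega))
      simp [hine, hj0 i hi]
  · -- j ≤ n-2 : derive contradiction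
    exfalso
    have hjlt := j.isLt
    have hj_le : (j:ℕ) ≤ n-2 := by omega
    obtain ⟨ib, hib⟩ : ∃ i : Fin n, (i:ℕ) = n-1 := ⟨⟨n-1, by omega⟩, rfl⟩
    have hc1 : ((a 1) ib : ℕ) = 0 := hj0 ib (fun he => by rw [he] at hib; omega)
    have hcend : ((a (n*n-3)) ib : ℕ) = n := by
      have hl := level_N3 hn (hv (n*n-3) (by omega) (by omega)) (hw (n*n-3) (by omega) (by omega))
      have hgoal : (⟨n-1, by omega⟩ : Fin n) = ib := Fin.ext (by simp only [Fin.val_mk, hib])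
      rw [hgoal] at hl
      exact hl
    have e14 : 1 + (n*n-4) = n*n-3 := by omega
    obtain ⟨s, hs1, hs2', hs3⟩ := discrete_ivt (fun s => ((a s) ib : ℕ)) 1 (n*n-4)
      (n-1-(j:ℕ)) (by omega)
      (by rw [e14, hcend]; omega)
      (by
        intro s hsa hsb
        exact unit_step (hm s hsa (by omega))
          (by rw [hw s (by omega) (by omega), hw (s+1) (by omega) (by omega)]) ib)
    have hs2 : s ≤ n*n-3 := by omega
    have hcs : ((a s) ib : ℕ) = n-1-(j:ℕ) := hs3
    have hja : 1 ≤ ((a s) j : ℕ) := by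
      have h1s : a 1 ≤ a s := by
        have := hmono (s-1) 1 (le_refl _) (by omega)
        have e : 1 + (s-1) = s := by omega
        rw [e] at this
        exact this
      have := Fin.le_def.mp (h1s j)
      omega
    have hcond := (hv s hs1 hs2).1 j ib (Fin.lt_def.mpr (by omega)) (by omega)
      (by rw [hib]; omega)
    rw [hib] at hcond
    omega
lemma chain_fiber {n : ℕ} {C : Finset (Fin n → Fin (n+1))}
    (hch : IsChain (· ≤ ·) (C : Set (Fin n → Fin (n+1)))) (s : ℕ) :
    (C.filter (fun r => wt r = s)).card ≤ 1 := by
  rw [Finset.card_le_one]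
  intro x hx y hy
  simp only [Finset.mem_filter] at hx hy
  rcases eq_or_ne x y with h | h
  · exact h
  · rcases hch (Finset.mem_coe.mpr hx.1) (Finset.mem_coe.mpr hy.1) h with hle | hle
    · exact eq_of_le_of_wt_le hle (by omega)
    · exact (eq_of_le_of_wt_le hle (by omega)).symm

lemma upper_part (n : ℕ) (hn : 4 ≤ n) (C₁ C₂ : Finset (Fin n → Fin (n+1)))
    (hv1 : ∀ r ∈ C₁, ValidB n r) (hv2 : ∀ r ∈ C₂, ValidB n r)
    (hc1 : IsChain (· ≤ ·) (C₁ : Set (Fin n → Fin (n+1))))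
    (hc2 : IsChain (· ≤ ·) (C₂ : Set (Fin n → Fin (n+1)))) :
    (C₁ ∪ C₂).card ≤ 2 * n ^ 2 - 3 := by
  have hnn : 16 ≤ n*n := Nat.mul_le_mul hn hn
  have hpow : n^2 = n*n := sq n
  have hUval : ∀ r ∈ C₁ ∪ C₂, ValidB n r := by
    intro r hr
    rcases Finset.mem_union.mp hr with h | h
    · exact hv1 r h
    · exact hv2 r h
  have hcard : (C₁ ∪ C₂).card
      = ∑ s ∈ Finset.range (n*n+1), ((C₁ ∪ C₂).filter (fun r => wt r = s)).card :=
    Finset.card_eq_sum_card_fiberwise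
      (fun x _ => Finset.mem_range.mpr (by have := wt_le x; omega))
  have ht2 : ∀ s, ((C₁ ∪ C₂).filter (fun r => wt r = s)).card ≤ 2 := by
    intro s
    calc ((C₁ ∪ C₂).filter (fun r => wt r = s)).card
        = (C₁.filter (fun r => wt r = s) ∪ C₂.filter (fun r => wt r = s)).card := by
          rw [Finset.filter_union]
      _ ≤ (C₁.filter (fun r => wt r = s)).card + (C₂.filter (fun r => wt r = s)).card :=
          Finset.card_union_le _ _
      _ ≤ 2 := by
          have := chain_fiber hc1 s
          have := chain_fiber hc2 s
          omega
  have huniq : ∀ s, (∀ x y : Fin n → Fin (n+1), ValidB n x → ValidB n y → wt x = s →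
      wt y = s → x = y) → ((C₁ ∪ C₂).filter (fun r => wt r = s)).card ≤ 1 := by
    intro s hu
    rw [Finset.card_le_one]
    intro x hx y hy
    simp only [Finset.mem_filter] at hx hy
    exact hu x y (hUval x hx.1) (hUval y hy.1) hx.2 hy.2
  have ht0 : ((C₁ ∪ C₂).filter (fun r => wt r = 0)).card ≤ 1 := by
    apply huniq
    intro x y hx hy hwx hwy
    funext i
    exact Fin.ext (by rw [level_0 hwx i, level_0 hwy i])
  have htN : ((C₁ ∪ C₂).filter (fun r => wt r = n*n)).card ≤ 1 := by
    apply huniq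
    intro x y hx hy hwx hwy
    funext i
    exact Fin.ext (by rw [level_top hwx i, level_top hwy i])
  have htN1 : ((C₁ ∪ C₂).filter (fun r => wt r = n*n-1)).card ≤ 1 := by
    apply huniq
    intro x y hx hy hwx hwy
    funext i
    exact Fin.ext (by rw [level_N1 hn hx hwx i, level_N1 hn hy hwy i])
  have htN2 : ((C₁ ∪ C₂).filter (fun r => wt r = n*n-2)).card ≤ 1 := by
    apply huniq
    intro x y hx hy hwx hwy
    funext i
    exact Fin.ext (by rw [level_N2 hn hx hwx i, level_N2 hn hy hwy i])
  by_contra hcon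
  push_neg at hcon
  -- every middle level is full
  have hall : ∀ s0, 1 ≤ s0 → s0 ≤ n*n-3 →
      ((C₁ ∪ C₂).filter (fun r => wt r = s0)).card = 2 := by
    intro s0 hs01 hs02
    by_contra hne
    have hts0 : ((C₁ ∪ C₂).filter (fun r => wt r = s0)).card ≤ 1 := by
      have := ht2 s0; omega
    set T : Finset ℕ := {0, s0, n*n-2, n*n-1, n*n} with hT
    have hTcard : T.card = 5 := by
      rw [hT]
      rw [Finset.card_insert_of_notMem (by simp; omega),
        Finset.card_insert_of_notMem (by simp; omega),
        Finset.card_insert_of_notMem (by simp; omega),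
        Finset.card_insert_of_notMem (by simp; omega),
        Finset.card_singleton]
    have hTsub : T ⊆ Finset.range (n*n+1) := by
      intro x hx
      rw [hT] at hx
      simp only [Finset.mem_insert, Finset.mem_singleton] at hx
      rw [Finset.mem_range]
      omega
    have hsub : ∀ s ∈ Finset.range (n*n+1),
        ((C₁ ∪ C₂).filter (fun r => wt r = s)).card ≤ (if s ∈ T then 1 else 2) := by
      intro s _
      split_ifs with h
      · rw [hT] at h
        simp only [Finset.mem_insert, Finset.mem_singleton] at h
        rcases h with rfl | rfl | rfl | rfl | rfl
        · exact ht0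
        · exact hts0
        · exact htN2
        · exact htN1
        · exact htN
      · exact ht2 s
    have hsum1 : ∑ s ∈ Finset.range (n*n+1), (if s ∈ T then (1:ℕ) else 0) = 5 := by
      rw [Finset.sum_ite_mem]
      rw [Finset.inter_comm, Finset.inter_eq_left.mpr hTsub]
      simp [hTcard]
    have hsum2 : ∑ s ∈ Finset.range (n*n+1),
        ((if s ∈ T then (1:ℕ) else 2) + (if s ∈ T then (1:ℕ) else 0)) = 2*(n*n+1) := by
      rw [Finset.sum_congr rfl (fun s _ => by split_ifs <;> rfl :
        ∀ s ∈ Finset.range (n*n+1),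
          ((if s ∈ T then (1:ℕ) else 2) + (if s ∈ T then (1:ℕ) else 0)) = 2)]
      rw [Finset.sum_const, Finset.card_range, smul_eq_mul, mul_comm]
    rw [Finset.sum_add_distrib, hsum1] at hsum2
    have hbound := Finset.sum_le_sum hsub
    omega
  -- each chain has an element at every middle level
  have hlev : ∀ s, 1 ≤ s → s ≤ n*n-3 →
      (∃ x ∈ C₁, wt x = s) ∧ (∃ x ∈ C₂, wt x = s) := by
    intro s hs1 hs2
    have h2' := hall s hs1 hs2
    have hgt : 1 < ((C₁ ∪ C₂).filter (fun r => wt r = s)).card := by omega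
    obtain ⟨x, hx, y, hy, hxy⟩ := Finset.one_lt_card.mp hgt
    simp only [Finset.mem_filter, Finset.mem_union] at hx hy
    constructor
    · rcases hx.1 with h | h
      · exact ⟨x, h, hx.2⟩
      · rcases hy.1 with h' | h'
        · exact ⟨y, h', hy.2⟩
        · exfalso
          rcases hc2 (Finset.mem_coe.mpr h) (Finset.mem_coe.mpr h') hxy with hle | hle
          · exact hxy (eq_of_le_of_wt_le hle (by omega))
          · exact hxy ((eq_of_le_of_wt_le hle (by omega)).symm)
    · rcases hx.1 with h | h
      · rcases hy.1 with h' | h'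
        · exfalso
          rcases hc1 (Finset.mem_coe.mpr h) (Finset.mem_coe.mpr h') hxy with hle | hle
          · exact hxy (eq_of_le_of_wt_le hle (by omega))
          · exact hxy ((eq_of_le_of_wt_le hle (by omega)).symm)
        · exact ⟨y, h', hy.2⟩
      · exact ⟨x, h, hx.2⟩
  -- choice functions
  have hbuild : ∀ (C : Finset (Fin n → Fin (n+1))), (∀ r ∈ C, ValidB n r) →
      IsChain (· ≤ ·) (C : Set (Fin n → Fin (n+1))) →
      (∀ s, 1 ≤ s → s ≤ n*n-3 → ∃ x ∈ C, wt x = s) →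
      ∃ a : ℕ → (Fin n → Fin (n+1)), (∀ s, 1 ≤ s → s ≤ n*n-3 → a s ∈ C) ∧
        (∀ s, 1 ≤ s → s ≤ n*n-3 → wt (a s) = s) ∧
        (∀ s, 1 ≤ s → s+1 ≤ n*n-3 → a s ≤ a (s+1)) := by
    intro C hCv hCc hCl
    classical
    choose! g hg1 hg2 using hCl
    refine ⟨g, hg1, hg2, ?_⟩
    intro s h1 h2
    have hxs : g s ∈ C := hg1 s h1 (by omega)
    have hxw : wt (g s) = s := hg2 s h1 (by omega)
    have hys : g (s+1) ∈ C := hg1 (s+1) (by omega) h2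
    have hyw : wt (g (s+1)) = s+1 := hg2 (s+1) (by omega) h2
    have hne : g s ≠ g (s+1) := by
      intro he
      rw [he] at hxw
      omega
    rcases hCc (Finset.mem_coe.mpr hxs) (Finset.mem_coe.mpr hys) hne with hle | hle
    · exact hle
    · exfalso
      have := wt_mono hle
      omega
  obtain ⟨a, ha1, ha2, ha3⟩ := hbuild C₁ hv1 hc1 (fun s h1 h2 => (hlev s h1 h2).1)
  obtain ⟨b, hb1, hb2, hb3⟩ := hbuild C₂ hv2 hc2 (fun s h1 h2 => (hlev s h1 h2).2)
  have hA := claimA hn a (fun s h1 h2 => hv1 _ (ha1 s h1 h2)) ha2 ha3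
  have hB := claimA hn b (fun s h1 h2 => hv2 _ (hb1 s h1 h2)) hb2 hb3
  have hab : a 1 = b 1 := by
    funext i
    exact Fin.ext (by rw [hA i, hB i])
  -- contradiction with level 1 having two elements
  have h1' := hall 1 (by omega) (by omega)
  have hgt : 1 < ((C₁ ∪ C₂).filter (fun r => wt r = 1)).card := by omega
  obtain ⟨x, hx, y, hy, hxy⟩ := Finset.one_lt_card.mp hgt
  simp only [Finset.mem_filter, Finset.mem_union] at hx hy
  have hxa : x = a 1 ∨ x = b 1 := by
    rcases hx.1 with h | h
    · left
      have hcf := chain_fiber hc1 1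
      rw [Finset.card_le_one] at hcf
      exact hcf x (Finset.mem_filter.mpr ⟨h, hx.2⟩)
        (a 1) (Finset.mem_filter.mpr ⟨ha1 1 (by omega) (by omega), ha2 1 (by omega) (by omega)⟩)
    · right
      have hcf := chain_fiber hc2 1
      rw [Finset.card_le_one] at hcf
      exact hcf x (Finset.mem_filter.mpr ⟨h, hx.2⟩)
        (b 1) (Finset.mem_filter.mpr ⟨hb1 1 (by omega) (by omega), hb2 1 (by omega) (by omega)⟩)
  have hya : y = a 1 ∨ y = b 1 := by
    rcases hy.1 with h | h
    · left
      have hcf := chain_fiber hc1 1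
      rw [Finset.card_le_one] at hcf
      exact hcf y (Finset.mem_filter.mpr ⟨h, hy.2⟩)
        (a 1) (Finset.mem_filter.mpr ⟨ha1 1 (by omega) (by omega), ha2 1 (by omega) (by omega)⟩)
    · right
      have hcf := chain_fiber hc2 1
      rw [Finset.card_le_one] at hcf
      exact hcf y (Finset.mem_filter.mpr ⟨h, hy.2⟩)
        (b 1) (Finset.mem_filter.mpr ⟨hb1 1 (by omega) (by omega), hb2 1 (by omega) (by omega)⟩)
  apply hxy
  rcases hxa with rfl | rfl <;> rcases hya with rfl | rfl
  · rfl
  · exact hab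
  · exact hab.symm
  · rfl

theorem lambda_one_plus_lambda_two (n : ℕ) (hn : 4 ≤ n) :
    (∃ C₁ C₂ : Finset (Fin n → Fin (n+1)),
      (∀ r ∈ C₁, ValidB n r) ∧ (∀ r ∈ C₂, ValidB n r) ∧
      IsChain (· ≤ ·) (C₁ : Set (Fin n → Fin (n+1))) ∧
      IsChain (· ≤ ·) (C₂ : Set (Fin n → Fin (n+1))) ∧
      (C₁ ∪ C₂).card = 2 * n ^ 2 - 3) ∧
    (∀ C₁ C₂ : Finset (Fin n → Fin (n+1)),
      (∀ r ∈ C₁, ValidB n r) → (∀ r ∈ C₂, ValidB n r) →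
      IsChain (· ≤ ·) (C₁ : Set (Fin n → Fin (n+1))) →
      IsChain (· ≤ ·) (C₂ : Set (Fin n → Fin (n+1))) →
      (C₁ ∪ C₂).card ≤ 2 * n ^ 2 - 3) :=
  ⟨exists_part n hn, fun C₁ C₂ h1 h2 h3 h4 => upper_part n hn C₁ C₂ h1 h2 h3 h4⟩
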